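/- arXiv:1107.4641 — 5 statements merged into one kernel-verified Lean document; each statement's English description precedes it below -/
import Mathlib

section
/- Let A be an MV-algebra and I₁, I₂ ideals of A. If a₁, a₂ ∈ A satisfy a₁ ≡ a₂ modulo the ideal generated by I₁ ∪ I₂, then there exists a ∈ A with a ≡ a₁ (mod I₁) and a ≡ a₂ (mod I₂). -/
/-- An MV-algebra. -/
class MV (A : Type*) where
  add : A → A → A
  neg : A → A
  zero : A
  add_assoc : ∀ a b c, add (add a b) c = add a (add b c)
  add_comm : ∀ a b, add a b = add b a
  add_zero : ∀ a, add a zero = a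
  neg_neg : ∀ a, neg (neg a) = a
  add_neg_zero : ∀ a, add a (neg zero) = neg zero
  lukasiewicz : ∀ a b, add (neg (add (neg a) b)) b = add (neg (add (neg b) a)) a

namespace MV
variable {A : Type*} [MV A]
/-- a ⊖ b := ¬(¬a ⊕ b) -/
def sub (a b : A) : A := neg (add (neg a) b)
/-- a ∨ b := (a ⊖ b) ⊕ b -/
def sup (a b : A) : A := add (sub a b) b
/-- a ∧ b := ¬(¬a ∨ ¬b) -/
def inf (a b : A) : A := neg (sup (neg a) (neg b))
/-- a ≤ b iff a ⊖ b = 0 -/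
def le (a b : A) : Prop := sub a b = zero
/-- Ideal: contains 0, closed under ⊕, downward closed. -/
def IsIdeal (I : Set A) : Prop :=
  zero ∈ I ∧ (∀ a b : A, a ∈ I → b ∈ I → add a b ∈ I) ∧
    (∀ a b : A, b ∈ I → le a b → a ∈ I)
/-- Congruence modulo an ideal: x ≡ y (mod I) iff x ⊖ y ∈ I and y ⊖ x ∈ I. -/
def cong (I : Set A) (x y : A) : Prop := sub x y ∈ I ∧ sub y x ∈ I
/-- The ideal (I, J) generated by I ∪ J: elements bounded by c ⊕ d, c ∈ I, d ∈ J. -/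
def gen (I J : Set A) : Set A := {x | ∃ c ∈ I, ∃ d ∈ J, le x (add c d)}
end MV

namespace MVAux
open MV (add neg zero sub le)

variable {A : Type*} [MV A]

lemma zero_add (a : A) : add zero a = a := by rw [MV.add_comm]; exact MV.add_zero a

lemma neg_add_self (a : A) : add (neg a) a = neg zero := by
  have h := MV.lukasiewicz a (neg zero : A)
  rw [MV.add_neg_zero, MV.neg_neg, zero_add] at h
  exact h.symm

lemma one_add (a : A) : add (neg zero) a = neg zero := by
  rw [MV.add_comm]; exact MV.add_neg_zero a

lemma sub_self (a : A) : sub a a = zero := by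
  unfold MV.sub; rw [neg_add_self, MV.neg_neg]

lemma le_refl (a : A) : le a a := sub_self a

lemma sup_comm (p q : A) : add (sub p q) q = add (sub q p) p := MV.lukasiewicz p q

lemma le_iff {a b : A} : le a b ↔ ∃ c, b = add a c := by
  constructor
  · intro h
    have hl := sup_comm a b
    rw [show sub a b = zero from h, zero_add] at hl
    exact ⟨sub b a, by rw [MV.add_comm]; exact hl⟩
  · rintro ⟨c, rfl⟩
    show sub a (add a c) = zero
    unfold MV.sub
    rw [← MV.add_assoc, neg_add_self, one_add, MV.neg_neg]

lemma le_trans {a b c : A} (hab : le a b) (hbc : le b c) : le a c := by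
  obtain ⟨u, rfl⟩ := le_iff.mp hab
  obtain ⟨v, rfl⟩ := le_iff.mp hbc
  exact le_iff.mpr ⟨add u v, MV.add_assoc a u v⟩

lemma add_le_add_right (c : A) {a b : A} (h : le a b) : le (add a c) (add b c) := by
  obtain ⟨u, rfl⟩ := le_iff.mp h
  exact le_iff.mpr ⟨u, by rw [MV.add_assoc, MV.add_comm u c, ← MV.add_assoc]⟩

lemma sub_neg (a b : A) : sub (neg b) (neg a) = sub a b := by
  unfold MV.sub; rw [MV.neg_neg, MV.add_comm]

lemma neg_le_neg {a b : A} (h : le a b) : le (neg b) (neg a) := by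
  show sub (neg b) (neg a) = zero
  rw [sub_neg]; exact h

lemma sub_le_sub_left {a b : A} (h : le a b) (c : A) : le (sub a c) (sub b c) :=
  neg_le_neg (add_le_add_right c (neg_le_neg h))

lemma sub_le_sub_right {a b : A} (h : le a b) (c : A) : le (sub c b) (sub c a) := by
  have h1 : le (add (neg c) a) (add (neg c) b) := by
    rw [MV.add_comm (neg c) a, MV.add_comm (neg c) b]
    exact add_le_add_right (neg c) h
  exact neg_le_neg h1

lemma sub_sub (x y z : A) : sub (sub x y) z = sub (sub x z) y := by
  unfold MV.sub
  rw [MV.neg_neg, MV.neg_neg, MV.add_assoc, MV.add_assoc, MV.add_comm y z]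

lemma sub_le_self (x y : A) : le (sub x y) x := by
  show sub (sub x y) x = zero
  unfold MV.sub
  rw [MV.neg_neg, MV.add_assoc, MV.add_comm y x, ← MV.add_assoc, neg_add_self, one_add,
    MV.neg_neg]

lemma sub_sub_self_le (x y : A) : le (sub x (sub x y)) y := by
  show sub (sub x (sub x y)) y = zero
  unfold MV.sub
  rw [MV.neg_neg, MV.add_assoc, MV.lukasiewicz x y,
    MV.add_comm (neg (add (neg y) x)) x, ← MV.add_assoc, neg_add_self, one_add, MV.neg_neg]

lemma add_sub_le (p q r : A) : le (sub (add p q) r) (add p (sub q r)) := by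
  show sub (sub (add p q) r) (add p (sub q r)) = zero
  unfold MV.sub
  rw [MV.neg_neg]
  have h1 : add (add (neg (add p q)) r) (add p (neg (add (neg q) r)))
      = add (neg (add p q)) (add p (add (neg (add (neg q) r)) r)) := by
    rw [MV.add_assoc, MV.add_comm r, MV.add_assoc]
  rw [h1, MV.lukasiewicz q r, ← MV.add_assoc p, MV.add_comm p (neg (add (neg r) q)),
    MV.add_assoc, ← MV.add_assoc, MV.add_comm (neg (add p q)) (neg (add (neg r) q)),
    MV.add_assoc, neg_add_self, MV.add_neg_zero, MV.neg_neg]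

lemma sub_le_of_le_add {x p w : A} (hx : le x (add p w)) : le (sub x w) p := by
  have h2 := add_sub_le p w w
  rw [sub_self, MV.add_zero] at h2
  exact le_trans (sub_le_sub_left hx w) h2

lemma le_sup_right (p q : A) : le q (add (sub p q) q) :=
  le_iff.mpr ⟨sub p q, MV.add_comm _ _⟩

lemma le_sup_left (p q : A) : le p (add (sub p q) q) := by
  rw [sup_comm]; exact le_sup_right q p

end MVAux

open MV in
theorem stmt3 {A : Type*} [MV A] {I₁ I₂ : Set A}
    (h₁ : IsIdeal I₁) (h₂ : IsIdeal I₂) (a₁ a₂ : A)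
    (h : cong (gen I₁ I₂) a₁ a₂) :
    ∃ a : A, cong I₁ a a₁ ∧ cong I₂ a a₂ := by
  open MVAux in
  obtain ⟨c₁, hc₁, d₁, hd₁, hb₁⟩ := h.1
  obtain ⟨c₂, hc₂, d₂, hd₂, hb₂⟩ := h.2
  -- u := a₁ ⊖ c₁, v := a₂ ⊖ d₂, a := u ∨ v = (u ⊖ v) ⊕ v
  refine ⟨add (sub (sub a₁ c₁) (sub a₂ d₂)) (sub a₂ d₂), ⟨?_, ?_⟩, ?_, ?_⟩
  · -- a ⊖ a₁ ≤ c₂ ∈ I₁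
    have hu1 : le (sub a₁ c₁) a₁ := sub_le_self a₁ c₁
    have hx : le (add (sub (sub a₁ c₁) (sub a₂ d₂)) (sub a₂ d₂))
        (add (sub (sub a₂ d₂) a₁) a₁) := by
      rw [sup_comm (sub a₂ d₂) a₁]
      exact add_le_add_right _ (sub_le_sub_left hu1 _)
    have h5 := sub_le_of_le_add hx
    have h6 : le (sub (sub a₂ d₂) a₁) c₂ := by
      rw [MVAux.sub_sub]
      exact le_trans (sub_le_sub_left hb₂ d₂) (sub_le_of_le_add (le_refl _))
    exact h₁.2.2 _ c₂ hc₂ (le_trans h5 h6)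
  · -- a₁ ⊖ a ≤ c₁ ∈ I₁
    have h5 : le (sub a₁ (add (sub (sub a₁ c₁) (sub a₂ d₂)) (sub a₂ d₂))) (sub a₁ (sub a₁ c₁)) :=
      sub_le_sub_right (le_sup_left _ _) a₁
    exact h₁.2.2 _ c₁ hc₁ (le_trans h5 (sub_sub_self_le a₁ c₁))
  · -- a ⊖ a₂ ≤ d₁ ∈ I₂
    have hv1 : le (sub a₂ d₂) a₂ := sub_le_self a₂ d₂
    have hx : le (add (sub (sub a₁ c₁) (sub a₂ d₂)) (sub a₂ d₂))
        (add (sub (sub a₁ c₁) a₂) a₂) := by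
      rw [sup_comm (sub a₁ c₁) (sub a₂ d₂), sup_comm (sub a₁ c₁) a₂]
      exact add_le_add_right _ (sub_le_sub_left hv1 _)
    have h5 := sub_le_of_le_add hx
    have h6 : le (sub (sub a₁ c₁) a₂) d₁ := by
      rw [MVAux.sub_sub]
      refine le_trans (sub_le_sub_left hb₁ c₁) (sub_le_of_le_add ?_)
      rw [MV.add_comm d₁ c₁]
      exact le_refl _
    exact h₂.2.2 _ d₁ hd₁ (le_trans h5 h6)
  · -- a₂ ⊖ a ≤ d₂ ∈ I₂
    have h5 : le (sub a₂ (add (sub (sub a₁ c₁) (sub a₂ d₂)) (sub a₂ d₂))) (sub a₂ (sub a₂ d₂)) :=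
      sub_le_sub_right (le_sup_right _ _) a₂
    exact h₂.2.2 _ d₂ hd₂ (le_trans h5 (sub_sub_self_le a₂ d₂))
end

section
/- Let A be an MV-algebra and I₁, ..., Iₙ ideals of A. If a₁, ..., aₙ ∈ A satisfy aᵢ ≡ aⱼ modulo the ideal generated by Iᵢ ∪ Iⱼ for all i, j, then there exists a ∈ A with a ≡ aᵢ (mod Iᵢ) for all i. (Chinese remainder theorem for MV-algebras.) -/
namespace MV
variable {A : Type*} [MV A]

lemma mv_zero_add (a : A) : add zero a = a := by rw [add_comm, add_zero]

lemma mv_one_add (a : A) : add (neg zero) a = neg zero := by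
  rw [add_comm]; exact add_neg_zero a

lemma mv_neg_add_self (a : A) : add (neg a) a = neg zero := by
  have h := lukasiewicz a (neg zero)
  rw [add_neg_zero (neg a), neg_neg, mv_zero_add, mv_zero_add] at h
  exact h.symm

lemma mv_add_neg_self (a : A) : add a (neg a) = neg zero := by
  rw [add_comm]; exact mv_neg_add_self a

lemma mv_le_iff_one {a b : A} : le a b ↔ add (neg a) b = neg zero := by
  unfold le sub
  constructor
  · intro h; rw [← neg_neg (add (neg a) b), h]
  · intro h; rw [h, neg_neg]

lemma mv_le_refl (a : A) : le a a := mv_le_iff_one.2 (mv_neg_add_self a)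

lemma mv_le_top (a : A) : le a (neg zero) := mv_le_iff_one.2 (add_neg_zero (neg a))

lemma mv_zero_le (a : A) : le zero a := mv_le_iff_one.2 (mv_one_add a)

lemma mv_le_add_self (a c : A) : le a (add a c) :=
  mv_le_iff_one.2 (by rw [← add_assoc, mv_neg_add_self, mv_one_add])

lemma mv_le_add_self' (a c : A) : le a (add c a) := by
  rw [add_comm]; exact mv_le_add_self a c

lemma mv_sup_comm (a b : A) : sup a b = sup b a := lukasiewicz a b

lemma mv_le_iff_exists {a b : A} : le a b ↔ ∃ c, b = add a c := by
  constructor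
  · intro h
    refine ⟨sub b a, ?_⟩
    have h1 : sup a b = b := by
      show add (sub a b) b = b
      rw [show sub a b = zero from h, mv_zero_add]
    have h2 : sup b a = add a (sub b a) := by
      show add (sub b a) a = add a (sub b a); rw [add_comm]
    calc b = sup a b := h1.symm
    _ = sup b a := mv_sup_comm a b
    _ = add a (sub b a) := h2
  · rintro ⟨c, rfl⟩; exact mv_le_add_self a c

lemma mv_le_trans {a b c : A} (h1 : le a b) (h2 : le b c) : le a c := by
  obtain ⟨u, rfl⟩ := mv_le_iff_exists.1 h1
  obtain ⟨v, rfl⟩ := mv_le_iff_exists.1 h2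
  exact mv_le_iff_exists.2 ⟨add u v, add_assoc a u v⟩

lemma mv_le_antisymm {a b : A} (h1 : le a b) (h2 : le b a) : a = b := by
  have e1 : sup a b = b := by
    show add (sub a b) b = b; rw [show sub a b = zero from h1, mv_zero_add]
  have e2 : sup b a = a := by
    show add (sub b a) a = a; rw [show sub b a = zero from h2, mv_zero_add]
  rw [← e2, mv_sup_comm, e1]

lemma mv_one_le {a : A} (h : le (neg zero) a) : a = neg zero :=
  mv_le_antisymm (mv_le_top a) h

lemma mv_le_of_one_le {a b : A} (h : le (neg zero) (add (neg a) b)) : le a b :=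
  mv_le_iff_one.2 (mv_one_le h)

lemma mv_add_le_add_left {a b : A} (c : A) (h : le a b) : le (add c a) (add c b) := by
  obtain ⟨u, rfl⟩ := mv_le_iff_exists.1 h
  exact mv_le_iff_exists.2 ⟨u, (add_assoc c a u).symm⟩

lemma mv_add_le_add_right {a b : A} (c : A) (h : le a b) : le (add a c) (add b c) := by
  rw [add_comm a c, add_comm b c]; exact mv_add_le_add_left c h

lemma mv_add_le_add {a b c d : A} (h1 : le a b) (h2 : le c d) : le (add a c) (add b d) :=
  mv_le_trans (mv_add_le_add_right c h1) (mv_add_le_add_left b h2)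

lemma mv_neg_le_neg {a b : A} (h : le a b) : le (neg b) (neg a) :=
  mv_le_iff_one.2 (by rw [neg_neg, add_comm]; exact mv_le_iff_one.1 h)

/-- a ≤ (a⊖b)⊕b -/
lemma mv_le_sub_add (a b : A) : le a (add (sub a b) b) := by
  have : add (sub a b) b = add a (sub b a) := by
    show sup a b = _
    rw [mv_sup_comm]
    show add (sub b a) a = _; rw [add_comm]
  rw [this]; exact mv_le_add_self a _

/-- (z⊕b)⊖b ≤ z -/
lemma mv_add_sub_cancel_le (z b : A) : le (sub (add z b) b) z := by
  apply mv_le_iff_one.2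
  show add (neg (neg (add (neg (add z b)) b))) z = neg zero
  rw [neg_neg, add_assoc, add_comm b z]
  exact mv_neg_add_self (add z b)

lemma mv_sub_le_mono_left {a a' : A} (b : A) (h : le a a') : le (sub a b) (sub a' b) := by
  apply mv_le_of_one_le
  have e : neg (sub a b) = add (neg a) b := neg_neg _
  rw [e]
  have h1 : le (neg zero) (add (neg a) a') := by
    rw [← mv_le_iff_one.1 h]; exact mv_le_refl _
  have h2 : le (add (neg a) a') (add (neg a) (add (sub a' b) b)) :=
    mv_add_le_add_left _ (mv_le_sub_add a' b)
  have e2 : add (neg a) (add (sub a' b) b) = add (add (neg a) b) (sub a' b) := by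
    rw [add_comm (sub a' b) b, ← add_assoc]
  exact mv_le_trans (mv_le_trans h1 h2) (e2 ▸ mv_le_refl _)

lemma mv_sub_le_iff {a b z : A} : le (sub a b) z ↔ le a (add z b) := by
  constructor
  · intro h
    exact mv_le_trans (mv_le_sub_add a b) (mv_add_le_add_right b h)
  · intro h
    exact mv_le_trans (mv_sub_le_mono_left b h) (mv_add_sub_cancel_le z b)

lemma mv_sub_le_mono_right {b b' : A} (a : A) (h : le b b') : le (sub a b') (sub a b) :=
  mv_neg_le_neg (mv_add_le_add_left (neg a) h)

lemma mv_sub_le_self (a b : A) : le (sub a b) a :=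
  mv_sub_le_iff.2 (mv_le_add_self a b)

lemma mv_sup_le {a b c : A} (h1 : le a c) (h2 : le b c) : le (sup a b) c := by
  obtain ⟨v, rfl⟩ := mv_le_iff_exists.1 h2
  show le (add (sub a b) b) (add b v)
  have k1 : le (sub a b) v := by
    have := mv_sub_le_mono_left b h1
    have k2 : le (sub (add b v) b) v := by
      rw [add_comm b v]; exact mv_add_sub_cancel_le v b
    exact mv_le_trans this k2
  have := mv_add_le_add_right b k1
  rw [add_comm v b] at this
  exact this

lemma mv_le_sup_left (a b : A) : le a (sup a b) := by
  rw [mv_sup_comm]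
  show le a (add (sub b a) a)
  rw [add_comm]; exact mv_le_add_self a _

lemma mv_le_sup_right (a b : A) : le b (sup a b) := by
  show le b (add (sub a b) b)
  rw [add_comm]; exact mv_le_add_self b _

lemma mv_inf_le_left (a b : A) : le (inf a b) a := by
  have h := mv_neg_le_neg (mv_le_sup_left (neg a) (neg b))
  rw [neg_neg] at h
  exact h

lemma mv_inf_le_right (a b : A) : le (inf a b) b := by
  have h := mv_neg_le_neg (mv_le_sup_right (neg a) (neg b))
  rw [neg_neg] at h
  exact h

lemma mv_le_inf {a b c : A} (h1 : le c a) (h2 : le c b) : le c (inf a b) := by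
  have h := mv_neg_le_neg (mv_sup_le (mv_neg_le_neg h1) (mv_neg_le_neg h2))
  rw [neg_neg] at h
  exact h

/-- key: x ≤ u⊕w, x ≤ v⊕w ⇒ x ≤ (u∧v)⊕w -/
lemma mv_le_inf_add {x u v w : A} (h1 : le x (add u w)) (h2 : le x (add v w)) :
    le x (add (inf u v) w) := by
  have g := mv_le_inf (mv_sub_le_iff.2 h1) (mv_sub_le_iff.2 h2)
  exact mv_le_trans (mv_le_sub_add x w) (mv_add_le_add_right w g)

/-- triangle: x⊖z ≤ (x⊖y)⊕(y⊖z) -/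
lemma mv_sub_triangle (x y z : A) : le (sub x z) (add (sub x y) (sub y z)) := by
  apply mv_sub_le_iff.2
  have h1 : le x (add (sub x y) y) := mv_le_sub_add x y
  have h2 : le (add (sub x y) y) (add (sub x y) (add (sub y z) z)) :=
    mv_add_le_add_left _ (mv_le_sub_add y z)
  have e : add (sub x y) (add (sub y z) z) = add (add (sub x y) (sub y z)) z :=
    (add_assoc _ _ _).symm
  exact mv_le_trans (mv_le_trans h1 h2) (e ▸ mv_le_refl _)

/-- x⊖(x⊖d) ≤ d -/
lemma mv_sub_sub_self_le (x d : A) : le (sub x (sub x d)) d := by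
  apply mv_sub_le_iff.2
  have := mv_le_sub_add x d
  rwa [add_comm (sub x d) d] at this

/-- Two-ideal CRT construction, purely order-theoretic part. -/
lemma mv_crt2 {a₁ a₂ c d : A} (h12 : le (sub a₁ a₂) (add c d))
    (h21 : le (sub a₂ a₁) (add c d)) :
    ∃ b, le (sub b a₁) c ∧ le (sub a₁ b) c ∧ le (sub b a₂) d ∧ le (sub a₂ b) d := by
  set X := inf a₁ (add a₂ d) with hX
  set Y := sub a₂ d with hY
  refine ⟨sup X Y, ?_, ?_, ?_, ?_⟩
  · apply mv_sub_le_iff.2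
    apply mv_sup_le
    · exact mv_le_trans (mv_inf_le_left _ _) (mv_le_add_self' a₁ c)
    · apply mv_sub_le_iff.2
      have t1 := mv_le_sub_add a₂ a₁
      have t2 := mv_add_le_add_right a₁ h21
      have e : add (add c d) a₁ = add (add c a₁) d := by
        rw [add_assoc, add_comm d a₁, ← add_assoc]
      exact e ▸ mv_le_trans t1 t2
  · apply mv_sub_le_iff.2
    have v1 : le a₁ (add a₁ c) := mv_le_add_self a₁ c
    have v2 : le a₁ (add (add a₂ d) c) := by
      have t1 := mv_le_sub_add a₁ a₂
      have t2 := mv_add_le_add_right a₂ h12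
      have e : add (add c d) a₂ = add (add a₂ d) c := by
        rw [add_comm (add c d) a₂, add_comm c d, ← add_assoc]
      exact e ▸ mv_le_trans t1 t2
    have w := mv_le_inf_add v1 v2
    have w2 : le (add (inf a₁ (add a₂ d)) c) (add c (sup X Y)) := by
      rw [add_comm c (sup X Y)]
      exact mv_add_le_add_right c (mv_le_sup_left X Y)
    exact mv_le_trans w w2
  · apply mv_sub_le_iff.2
    apply mv_sup_le
    · have t := mv_inf_le_right a₁ (add a₂ d)
      rw [add_comm d a₂]
      exact t
    · exact mv_le_trans (mv_sub_le_self a₂ d) (mv_le_add_self' a₂ d)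
  · exact mv_le_trans (mv_sub_le_mono_right a₂ (mv_le_sup_right X Y))
      (mv_sub_sub_self_le a₂ d)

/-- Combining bounds over finitely many ideals. -/
lemma mv_combine : ∀ {n : ℕ} (I : Fin n → Set A), (∀ i, IsIdeal (I i)) →
    ∀ (J : Set A), IsIdeal J → ∀ (x y : A),
    (∀ i, ∃ c ∈ I i, ∃ d ∈ J, le x (add c d) ∧ le y (add c d)) →
    ∃ c, (∀ i, c ∈ I i) ∧ ∃ d ∈ J, le x (add c d) ∧ le y (add c d) := by
  intro n
  induction n with
  | zero =>
    intro I hI J hJ x y hx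
    refine ⟨neg zero, fun i => i.elim0, zero, hJ.1, ?_, ?_⟩
    · rw [add_zero]; exact mv_le_top x
    · rw [add_zero]; exact mv_le_top y
  | succ n ih =>
    intro I hI J hJ x y hx
    obtain ⟨c₀, hc₀, d₀, hd₀, hx₀, hy₀⟩ :=
      ih (fun i => I i.castSucc) (fun i => hI _) J hJ x y (fun i => hx i.castSucc)
    obtain ⟨c₁, hc₁, d₁, hd₁, hx₁, hy₁⟩ := hx (Fin.last n)
    refine ⟨inf c₀ c₁, ?_, add d₀ d₁, hJ.2.1 _ _ hd₀ hd₁, ?_, ?_⟩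
    · intro i
      induction i using Fin.lastCases with
      | last => exact (hI _).2.2 _ _ hc₁ (mv_inf_le_right c₀ c₁)
      | cast j => exact (hI _).2.2 _ _ (hc₀ j) (mv_inf_le_left c₀ c₁)
    · exact mv_le_inf_add
        (mv_le_trans hx₀ (mv_add_le_add_left c₀ (mv_le_add_self d₀ d₁)))
        (mv_le_trans hx₁ (mv_add_le_add_left c₁ (mv_le_add_self' d₁ d₀)))
    · exact mv_le_inf_add
        (mv_le_trans hy₀ (mv_add_le_add_left c₀ (mv_le_add_self d₀ d₁)))
        (mv_le_trans hy₁ (mv_add_le_add_left c₁ (mv_le_add_self' d₁ d₀)))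

end MV

open MV in
theorem stmt5 {A : Type*} [MV A] {n : ℕ} {I : Fin n → Set A}
    (hI : ∀ i, IsIdeal (I i)) (a : Fin n → A)
    (h : ∀ i j, cong (gen (I i) (I j)) (a i) (a j)) :
    ∃ b : A, ∀ i, cong (I i) b (a i) := by
  induction n with
  | zero => exact ⟨MV.zero, fun i => i.elim0⟩
  | succ n ih =>
    obtain ⟨b', hb'⟩ := ih (I := fun i => I i.castSucc) (fun i => hI _)
      (fun i => a i.castSucc) (fun i j => h _ _)
    have key : ∀ i : Fin n, ∃ c ∈ I i.castSucc, ∃ d ∈ I (Fin.last n),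
        le (sub b' (a (Fin.last n))) (add c d) ∧
        le (sub (a (Fin.last n)) b') (add c d) := by
      intro i
      obtain ⟨e₁, e₂⟩ := hb' i
      obtain ⟨g₁, g₂⟩ := h i.castSucc (Fin.last n)
      obtain ⟨c₁, hc₁, d₁, hd₁, hl₁⟩ := g₁
      obtain ⟨c₂, hc₂, d₂, hd₂, hl₂⟩ := g₂
      set s₁ := sub b' (a i.castSucc) with hs₁
      set s₂ := sub (a i.castSucc) b' with hs₂
      refine ⟨add (add (add s₁ s₂) c₁) c₂,
        (hI _).2.1 _ _ ((hI _).2.1 _ _ ((hI _).2.1 _ _ e₁ e₂) hc₁) hc₂,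
        add d₁ d₂, (hI _).2.1 _ _ hd₁ hd₂, ?_, ?_⟩
      · have t := mv_sub_triangle b' (a i.castSucc) (a (Fin.last n))
        have t2 := mv_add_le_add_left s₁ hl₁
        have e : add s₁ (add c₁ d₁) = add (add s₁ c₁) d₁ := (MV.add_assoc _ _ _).symm
        have hcc : le (add s₁ c₁) (add (add (add s₁ s₂) c₁) c₂) :=
          mv_le_trans (mv_add_le_add_right c₁ (mv_le_add_self s₁ s₂))
            (mv_le_add_self _ c₂)
        have hdd : le d₁ (add d₁ d₂) := mv_le_add_self d₁ d₂
        exact mv_le_trans (mv_le_trans t t2) (e ▸ mv_add_le_add hcc hdd)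
      · have t := mv_sub_triangle (a (Fin.last n)) (a i.castSucc) b'
        have t2 := mv_add_le_add_right s₂ hl₂
        have e : add (add c₂ d₂) s₂ = add (add s₂ c₂) d₂ := by
          rw [MV.add_comm (add c₂ d₂) s₂, ← MV.add_assoc]
        have hcc : le (add s₂ c₂) (add (add (add s₁ s₂) c₁) c₂) :=
          mv_add_le_add_right c₂
            (mv_le_trans (mv_le_add_self' s₂ s₁) (mv_le_add_self _ c₁))
        have hdd : le d₂ (add d₁ d₂) := mv_le_add_self' d₂ d₁
        exact mv_le_trans (mv_le_trans t t2) (e ▸ mv_add_le_add hcc hdd)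
    obtain ⟨c, hc, d, hd, hbd1, hbd2⟩ :=
      mv_combine _ (fun i => hI _) _ (hI (Fin.last n)) _ _ key
    obtain ⟨b, k1, k2, k3, k4⟩ := mv_crt2 hbd1 hbd2
    refine ⟨b, ?_⟩
    intro i
    induction i using Fin.lastCases with
    | last => exact ⟨(hI _).2.2 _ _ hd k3, (hI _).2.2 _ _ hd k4⟩
    | cast j =>
      obtain ⟨e₁, e₂⟩ := hb' j
      constructor
      · exact (hI _).2.2 _ (add c (sub b' (a j.castSucc)))
          ((hI _).2.1 _ _ (hc j) e₁)
          (mv_le_trans (mv_sub_triangle b b' _) (mv_add_le_add_right _ k1))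
      · exact (hI _).2.2 _ (add (sub (a j.castSucc) b') c)
          ((hI _).2.1 _ _ e₂ (hc j))
          (mv_le_trans (mv_sub_triangle _ b' b) (mv_add_le_add_left _ k2))
end

section
/- For every linear polynomial g(x₁,...,xₙ) = c₀ + c₁x₁ + ... + cₙxₙ with integer coefficients, the truncated function g♯ := (g ∨ 0) ∧ 1 : [0,1]ⁿ → [0,1] is an MV term function, i.e., it lies in the MV-subalgebra of functions [0,1]ⁿ → [0,1] generated by the coordinate projections. -/
noncomputable section

/-- The unit interval [0,1]. -/
abbrev UI : Type := Set.Icc (0:ℝ) 1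

/-- MV sum on [0,1]: x ⊕ y = min(x+y, 1). -/
def oplus (x y : UI) : UI :=
  ⟨min (x.1 + y.1) 1, le_min (add_nonneg x.2.1 y.2.1) zero_le_one, min_le_right _ _⟩

/-- MV negation on [0,1]: ¬x = 1 - x. -/
def mneg (x : UI) : UI :=
  ⟨1 - x.1, by constructor <;> [linarith [x.2.2]; linarith [x.2.1]]⟩

/-- 0 in [0,1]. -/
def zeroUI : UI := ⟨0, le_refl 0, zero_le_one⟩

/-- Derived x ⊖ y = ¬(¬x ⊕ y). -/
def subUI (x y : UI) : UI := mneg (oplus (mneg x) y)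

/-- MV term functions in n variables: the subalgebra of functions [0,1]ⁿ → [0,1]
generated by the coordinate projections. -/
inductive IsTerm (n : ℕ) : ((Fin n → UI) → UI) → Prop
  | proj (i : Fin n) : IsTerm n fun x => x i
  | zero : IsTerm n fun _ => zeroUI
  | add {f g} : IsTerm n f → IsTerm n g → IsTerm n fun x => oplus (f x) (g x)
  | neg {f} : IsTerm n f → IsTerm n fun x => mneg (f x)

/-- The linear polynomial c₀ + Σ cᵢ xᵢ with integer coefficients. -/
def lin {n : ℕ} (c₀ : ℤ) (c : Fin n → ℤ) (x : Fin n → UI) : ℝ :=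
  (c₀ : ℝ) + ∑ i, (c i : ℝ) * (x i).1

/-- Truncation g♯ of a real number to [0,1]. -/
def sharp (r : ℝ) : UI :=
  ⟨max 0 (min r 1), le_max_left _ _, max_le zero_le_one (min_le_right _ _)⟩

set_option maxHeartbeats 2000000 in
lemma keyR (s x : ℝ) (hx0 : 0 ≤ x) (hx1 : x ≤ 1) :
    max 0 (min (s + x) 1)
      = min (max 0 (min s 1) + (1 - min ((1 - x) + max 0 (min (-s) 1)) 1)) 1 := by
  rcases le_total s (-1) with h | h
  · rcases le_total x (1:ℝ) with _ | _ <;>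
      simp only [min_def, max_def] <;> split_ifs <;> linarith
  · rcases le_total s 0 with h' | h'
    · simp only [min_def, max_def] <;> split_ifs <;> linarith
    · rcases le_total s 1 with h'' | h'' <;>
        · simp only [min_def, max_def]; split_ifs <;> linarith

lemma key (s : ℝ) (x : UI) :
    sharp (s + x.1) = oplus (sharp s) (subUI x (sharp (-s))) := by
  apply Subtype.ext
  exact keyR s x.1 x.2.1 x.2.2

lemma key' (s : ℝ) (x : UI) :
    sharp (s - x.1) = oplus (sharp (s - 1)) (subUI (mneg x) (sharp (1 - s))) := by
  have := key (s - 1) (mneg x)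
  rw [show (s - 1) + (mneg x).1 = s - x.1 by simp only [mneg]; ring] at this
  rw [this]; ring_nf

theorem stmt7 (n : ℕ) (c₀ : ℤ) (c : Fin n → ℤ) :
    IsTerm n (fun x => sharp (lin c₀ c x)) := by
  suffices H : ∀ N (c : Fin n → ℤ), (∑ i, (c i).natAbs) = N →
      ∀ c₀ : ℤ, IsTerm n (fun x => sharp (lin c₀ c x)) from H _ c rfl c₀
  intro N
  induction N using Nat.strong_induction_on with
  | _ N ih =>
    intro c hc c₀
    by_cases h : ∀ i, c i = 0
    · -- constant case
      have hl : ∀ x, lin c₀ c x = (c₀ : ℝ) := by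
        intro x; simp [lin, h]
      rcases le_or_gt c₀ 0 with hc₀ | hc₀
      · have : (fun x => sharp (lin c₀ c x)) = fun _ => zeroUI := by
          funext x
          apply Subtype.ext
          simp only [sharp, hl, zeroUI]
          have h0 : (c₀ : ℝ) ≤ 0 := by exact_mod_cast hc₀
          exact max_eq_left (le_trans (min_le_left _ _) h0)
        rw [this]; exact IsTerm.zero
      · have h1 : (1:ℝ) ≤ (c₀ : ℝ) := by exact_mod_cast hc₀
        have : (fun x => sharp (lin c₀ c x)) = fun x => mneg ((fun _ => zeroUI) x) := by
          funext x
          apply Subtype.ext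
          simp only [sharp, hl, mneg, zeroUI]
          rw [min_eq_right h1, max_eq_right zero_le_one]; norm_num
        rw [this]; exact IsTerm.neg IsTerm.zero
    · push_neg at h
      obtain ⟨j, hj⟩ := h
      rcases hj.lt_or_gt with hneg | hpos
      · -- c j < 0 : write lin c₀ c = lin c₀ c' - x j with c' = update c j (c j + 1)
        set c' : Fin n → ℤ := Function.update c j (c j + 1) with hc'
        have hsum : (∑ i, (c' i).natAbs) + 1 = N := by
          rw [← hc]
          rw [Fintype.sum_eq_add_sum_compl j, Fintype.sum_eq_add_sum_compl j
            (fun i => (c i).natAbs)]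
          have h1 : (c' j).natAbs + 1 = (c j).natAbs := by
            have e : c' j = c j + 1 := by rw [hc']; simp
            omega
          have h2 : ∀ i ∈ ({j}ᶜ : Finset (Fin n)), (c' i).natAbs = (c i).natAbs := by
            intro i hi
            simp only [Finset.mem_compl, Finset.mem_singleton] at hi
            simp [hc', Function.update_of_ne hi]
          rw [Finset.sum_congr rfl h2]
          omega
        have hlin : ∀ x, lin c₀ c x = lin c₀ c' x - (x j).1 := by
          intro x
          simp only [lin]
          rw [Fintype.sum_eq_add_sum_compl j, Fintype.sum_eq_add_sum_compl j
            (fun i => (c' i : ℝ) * (x i).1)]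
          have h2 : ∀ i ∈ ({j}ᶜ : Finset (Fin n)), (c' i : ℝ) * (x i).1 = (c i : ℝ) * (x i).1 := by
            intro i hi
            simp only [Finset.mem_compl, Finset.mem_singleton] at hi
            simp [hc', Function.update_of_ne hi]
          rw [Finset.sum_congr rfl h2]
          simp only [hc', Function.update_self]
          push_cast; ring
        have hlt : (∑ i, (c' i).natAbs) < N := by omega
        have ht1 := ih _ hlt c' rfl (c₀ - 1)
        have ht2 := ih _ hlt (fun i => -(c' i)) (by simp) (1 - c₀)
        have hneg' : ∀ c₀' x, lin c₀' (fun i => -(c' i)) x = - lin (-c₀') c' x := by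
          intro c₀' x; simp [lin, Finset.sum_neg_distrib]; push_cast; ring
        have goal_eq : (fun x => sharp (lin c₀ c x))
            = fun x => oplus (sharp (lin (c₀ - 1) c' x))
                (subUI (mneg (x j)) (sharp (lin (1 - c₀) (fun i => -(c' i)) x))) := by
          funext x
          rw [hlin, key' (lin c₀ c' x) (x j)]
          congr 1
          · congr 1; simp [lin]; push_cast; ring
          · congr 1; apply congrArg
            rw [hneg' (1 - c₀) x]
            simp only [neg_sub]
            congr 1; simp [lin]; push_cast; ring_nf
        rw [goal_eq]
        exact IsTerm.add ht1 ((IsTerm.neg (IsTerm.add (IsTerm.neg (IsTerm.neg (IsTerm.proj j))) ht2)))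
      · -- c j > 0
        set c' : Fin n → ℤ := Function.update c j (c j - 1) with hc'
        have hsum : (∑ i, (c' i).natAbs) + 1 = N := by
          rw [← hc]
          rw [Fintype.sum_eq_add_sum_compl j, Fintype.sum_eq_add_sum_compl j
            (fun i => (c i).natAbs)]
          have h1 : (c' j).natAbs + 1 = (c j).natAbs := by
            have e : c' j = c j - 1 := by rw [hc']; simp
            omega
          have h2 : ∀ i ∈ ({j}ᶜ : Finset (Fin n)), (c' i).natAbs = (c i).natAbs := by
            intro i hi
            simp only [Finset.mem_compl, Finset.mem_singleton] at hi
            simp [hc', Function.update_of_ne hi]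
          rw [Finset.sum_congr rfl h2]
          omega
        have hlin : ∀ x, lin c₀ c x = lin c₀ c' x + (x j).1 := by
          intro x
          simp only [lin]
          rw [Fintype.sum_eq_add_sum_compl j, Fintype.sum_eq_add_sum_compl j
            (fun i => (c' i : ℝ) * (x i).1)]
          have h2 : ∀ i ∈ ({j}ᶜ : Finset (Fin n)), (c' i : ℝ) * (x i).1 = (c i : ℝ) * (x i).1 := by
            intro i hi
            simp only [Finset.mem_compl, Finset.mem_singleton] at hi
            simp [hc', Function.update_of_ne hi]
          rw [Finset.sum_congr rfl h2]
          simp only [hc', Function.update_self]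
          push_cast; ring
        have hlt : (∑ i, (c' i).natAbs) < N := by omega
        have ht1 := ih _ hlt c' rfl c₀
        have ht2 := ih _ hlt (fun i => -(c' i)) (by simp) (-c₀)
        have goal_eq : (fun x => sharp (lin c₀ c x))
            = fun x => oplus (sharp (lin c₀ c' x))
                (subUI (x j) (sharp (lin (-c₀) (fun i => -(c' i)) x))) := by
          funext x
          rw [hlin, key (lin c₀ c' x) (x j)]
          congr 2
          simp [lin, Finset.sum_neg_distrib]; push_cast; ring
        rw [goal_eq]
        exact IsTerm.add ht1 (IsTerm.neg (IsTerm.add (IsTerm.neg (IsTerm.proj j)) ht2))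
end
end

section
/- McNaughton's theorem: every McNaughton function f : [0,1]ⁿ → [0,1] is an MV term function, i.e., lies in the MV-subalgebra of functions [0,1]ⁿ → [0,1] generated by the coordinate projections. -/
noncomputable section

-- ===== auxiliary development =====

lemma UI.le_iff {a b : UI} : a ≤ b ↔ a.1 ≤ b.1 := Iff.rfl

lemma zeroUI_le (a : UI) : zeroUI ≤ a := a.2.1

lemma le_oneUI (a : UI) : a ≤ mneg zeroUI := by
  simpa [UI.le_iff, mneg, zeroUI] using a.2.2

lemma sharp_val (r : ℝ) : (sharp r).1 = max 0 (min r 1) := rfl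

lemma sharp_eq_self (a : UI) : sharp a.1 = a := by
  apply Subtype.ext
  have h0 := a.2.1; have h1 := a.2.2
  simp [sharp_val, min_eq_left h1, max_eq_right h0]

lemma sharp_mono {r s : ℝ} (h : r ≤ s) : sharp r ≤ sharp s := by
  rw [UI.le_iff]
  exact max_le_max le_rfl (min_le_min h le_rfl)

/-- pointwise max as an MV expression -/
def maxUI (a b : UI) : UI := oplus (subUI a b) b

lemma maxUI_val (a b : UI) : (maxUI a b).1 = max a.1 b.1 := by
  have ha0 := a.2.1; have ha1 := a.2.2; have hb0 := b.2.1; have hb1 := b.2.2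
  simp only [maxUI, oplus, subUI, mneg]
  simp only [min_def, max_def]
  split_ifs <;> linarith

def minUI (a b : UI) : UI := mneg (maxUI (mneg a) (mneg b))

lemma minUI_val (a b : UI) : (minUI a b).1 = min a.1 b.1 := by
  have := maxUI_val (mneg a) (mneg b)
  simp only [minUI, mneg] at *
  rw [this]
  rcases le_total a.1 b.1 with h | h
  · rw [min_eq_left h, max_eq_left (by linarith)]; ring
  · rw [min_eq_right h, max_eq_right (by linarith)]; ring

def odot (a b : UI) : UI := mneg (oplus (mneg a) (mneg b))

lemma odot_val (a b : UI) : (odot a b).1 = max (a.1 + b.1 - 1) 0 := by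
  have ha0 := a.2.1; have ha1 := a.2.2; have hb0 := b.2.1; have hb1 := b.2.2
  simp only [odot, oplus, mneg, min_def, max_def]
  split_ifs <;> linarith

lemma isTerm_maxUI {n f g} (hf : IsTerm n f) (hg : IsTerm n g) :
    IsTerm n fun x => maxUI (f x) (g x) :=
  IsTerm.add (IsTerm.neg (IsTerm.add (IsTerm.neg hf) hg)) hg

lemma isTerm_minUI {n f g} (hf : IsTerm n f) (hg : IsTerm n g) :
    IsTerm n fun x => minUI (f x) (g x) :=
  IsTerm.neg (isTerm_maxUI (IsTerm.neg hf) (IsTerm.neg hg))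

set_option maxHeartbeats 1000000 in
/-- the key truncation identity -/
lemma clamp_add (u x : ℝ) (h0 : 0 ≤ x) (h1 : x ≤ 1) :
    max 0 (min (u + x) 1) =
      max (min (max 0 (min u 1) + x) 1 + max 0 (min (u + 1) 1) - 1) 0 := by
  simp only [min_def, max_def]
  split_ifs <;> linarith

lemma lin_update {n : ℕ} (c₀ : ℤ) (c : Fin n → ℤ) (i : Fin n) (m : ℤ) (x : Fin n → UI) :
    lin c₀ (Function.update c i m) x = lin c₀ c x + ((m : ℝ) - (c i : ℝ)) * (x i).1 := by
  simp only [lin]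
  have h : ∀ j : Fin n, ((Function.update c i m j : ℤ) : ℝ) * (x j).1 =
      (c j : ℝ) * (x j).1 + (if j = i then ((m : ℝ) - (c i : ℝ)) * (x i).1 else 0) := by
    intro j
    by_cases hj : j = i
    · subst hj; simp [Function.update_self]; ring
    · simp [Function.update_of_ne hj, hj]
  rw [Finset.sum_congr rfl (fun j _ => h j), Finset.sum_add_distrib,
    Finset.sum_ite_eq' Finset.univ i]
  simp; ring

lemma lin_const_add {n : ℕ} (c₀ d : ℤ) (c : Fin n → ℤ) (x : Fin n → UI) :
    lin (c₀ + d) c x = lin c₀ c x + (d : ℝ) := by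
  simp only [lin]; push_cast; ring

lemma sharpLin_isTerm {n : ℕ} (m : ℕ) : ∀ (c : Fin n → ℤ), (∑ i, (c i).natAbs) = m →
    ∀ c₀ : ℤ, IsTerm n (fun x => sharp (lin c₀ c x)) := by
  induction m with
  | zero =>
    intro c hc c₀
    have hz : ∀ i, c i = 0 := by
      intro i
      have := Finset.sum_eq_zero_iff.mp hc i (Finset.mem_univ i)
      omega
    have hl : ∀ x, lin c₀ c x = (c₀ : ℝ) := by
      intro x; simp [lin, hz]
    rcases le_or_gt c₀ 0 with h | h
    · have hc0 : (c₀ : ℝ) ≤ 0 := by exact_mod_cast h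
      have : (fun x : Fin n → UI => sharp (lin c₀ c x)) = fun _ => zeroUI := by
        funext x; apply Subtype.ext
        rw [sharp_val, hl x]
        show max 0 (min ((c₀ : ℝ)) 1) = 0
        exact max_eq_left (le_trans (min_le_left _ _) hc0)
      rw [this]; exact IsTerm.zero
    · have h1 : (1 : ℝ) ≤ (c₀ : ℝ) := by exact_mod_cast h
      have : (fun x : Fin n → UI => sharp (lin c₀ c x)) = fun _ => mneg zeroUI := by
        funext x; apply Subtype.ext
        rw [sharp_val, hl x]
        show max 0 (min ((c₀ : ℝ)) 1) = 1 - (0 : ℝ)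
        rw [min_eq_right h1]; norm_num
      rw [this]; exact IsTerm.neg IsTerm.zero
  | succ m IH =>
    intro c hc c₀
    have hex : ∃ i, c i ≠ 0 := by
      by_contra h
      push_neg at h
      simp [h] at hc
    obtain ⟨i, hi⟩ := hex
    have habs : ∀ (v : ℤ), (∑ j, ((Function.update c i v) j).natAbs) =
        (∑ j ∈ Finset.univ.erase i, (c j).natAbs) + v.natAbs := by
      intro v
      rw [← Finset.add_sum_erase _ _ (Finset.mem_univ i)]
      simp only [Function.update_self]
      rw [add_comm]
      congr 1
      apply Finset.sum_congr rfl
      intro j hj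
      rw [Function.update_of_ne (Finset.mem_erase.mp hj).1]
    have htot : (c i).natAbs + (∑ j ∈ Finset.univ.erase i, (c j).natAbs) = m + 1 := by
      have h := Finset.sum_erase_add Finset.univ (fun j => (c j).natAbs) (Finset.mem_univ i)
      rw [← hc, ← h, add_comm]
    rcases lt_or_gt_of_ne hi with hneg | hpos
    · -- c i < 0 : use c' = update c i (c i + 1)
      set c' := Function.update c i (c i + 1) with hc'
      have hsum : (∑ j, (c' j).natAbs) = m := by
        rw [habs]; omega
      have h1 := IH c' hsum (c₀ - 1)
      have h2 := IH c' hsum c₀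
      have key : (fun x : Fin n → UI => sharp (lin c₀ c x)) =
          fun x => mneg (oplus (mneg (oplus (sharp (lin (c₀ - 1) c' x)) (mneg (x i))))
            (mneg (sharp (lin c₀ c' x)))) := by
        funext x; apply Subtype.ext
        have hval : lin c₀ c' x = lin c₀ c x + (x i).1 := by
          rw [hc', lin_update]; push_cast; ring_nf
        have h3 : lin c₀ c' x = lin (c₀ - 1) c' x + 1 := by
          have := lin_const_add (c₀ - 1) 1 c' x
          rw [sub_add_cancel] at this
          rw [this]; norm_num
        have hx0 := (x i).2.1
        have hx1 := (x i).2.2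
        have hmain := clamp_add (lin (c₀ - 1) c' x) (1 - (x i).1) (by linarith) (by linarith)
        have e1 : lin (c₀ - 1) c' x + (1 - (x i).1) = lin c₀ c x := by
          rw [show lin (c₀ - 1) c' x = lin c₀ c' x - 1 by linarith, hval]; ring
        have e2 : lin (c₀ - 1) c' x + 1 = lin c₀ c' x := by linarith
        rw [e1, e2] at hmain
        show (sharp (lin c₀ c x)).1 =
          (odot (oplus (sharp (lin (c₀ - 1) c' x)) (mneg (x i))) (sharp (lin c₀ c' x))).1
        rw [odot_val]
        simp only [oplus, mneg, sharp_val]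
        exact hmain
      rw [key]
      exact IsTerm.neg (IsTerm.add (IsTerm.neg (IsTerm.add h1 (IsTerm.neg (IsTerm.proj i)))) (IsTerm.neg h2))
    · -- c i > 0 : use c' = update c i (c i - 1)
      set c' := Function.update c i (c i - 1) with hc'
      have hsum : (∑ j, (c' j).natAbs) = m := by
        rw [habs]; omega
      have h1 := IH c' hsum c₀
      have h2 := IH c' hsum (c₀ + 1)
      have key : (fun x : Fin n → UI => sharp (lin c₀ c x)) =
          fun x => mneg (oplus (mneg (oplus (sharp (lin c₀ c' x)) (x i)))
            (mneg (sharp (lin (c₀ + 1) c' x)))) := by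
        funext x; apply Subtype.ext
        have hval : lin c₀ c' x = lin c₀ c x - (x i).1 := by
          rw [hc', lin_update]; push_cast; ring_nf
        have hx0 := (x i).2.1
        have hx1 := (x i).2.2
        have hmain := clamp_add (lin c₀ c' x) ((x i).1) hx0 hx1
        have e1 : lin c₀ c' x + (x i).1 = lin c₀ c x := by rw [hval]; ring
        have e2 : lin c₀ c' x + 1 = lin (c₀ + 1) c' x := by rw [lin_const_add]; norm_num
        rw [e1, e2] at hmain
        show (sharp (lin c₀ c x)).1 =
          (odot (oplus (sharp (lin c₀ c' x)) (x i)) (sharp (lin (c₀ + 1) c' x))).1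
        rw [odot_val]
        simp only [oplus, mneg, sharp_val]
        exact hmain
      rw [key]
      exact IsTerm.neg (IsTerm.add (IsTerm.neg (IsTerm.add h1 (IsTerm.proj i))) (IsTerm.neg h2))

/-- One-dimensional selection lemma: a continuous selection among the affine
interpolants `t ↦ (1-t) * u j + t * v j` on [0,1] admits an index `j` with
`u j ≥ F 0` and `v j ≤ F 1`. -/
lemma oneDim {k : ℕ} (F : ℝ → ℝ) (hF : Continuous F) (u v : Fin k → ℝ)
    (hsel : ∀ t ∈ Set.Icc (0:ℝ) 1, ∃ j, F t = (1 - t) * u j + t * v j) :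
    ∃ j, F 0 ≤ u j ∧ v j ≤ F 1 := by
  set L : Fin k → ℝ → ℝ := fun j t => (1 - t) * u j + t * v j with hL
  have hLc : ∀ j, Continuous (L j) := by
    intro j; simp only [hL]; continuity
  set C : Set ℝ := Set.Icc 0 1 ∩ ⋃ j, {t | F 0 ≤ u j ∧ L j t ≤ F t} with hC
  have hCclosed : IsClosed C := by
    apply IsClosed.inter isClosed_Icc
    apply isClosed_iUnion_of_finite
    intro j
    by_cases h : F 0 ≤ u j
    · have : {t | F 0 ≤ u j ∧ L j t ≤ F t} = {t | L j t ≤ F t} := by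
        ext t; simp [h]
      rw [this]
      exact isClosed_le (hLc j) hF
    · have : {t | F 0 ≤ u j ∧ L j t ≤ F t} = ∅ := by
        ext t; simp [h]
      rw [this]; exact isClosed_empty
  have h0C : (0:ℝ) ∈ C := by
    obtain ⟨j, hj⟩ := hsel 0 (by norm_num)
    have hj0 : F 0 = u j := by simpa [hL] using hj
    refine ⟨by norm_num, Set.mem_iUnion.2 ⟨j, le_of_eq hj0, ?_⟩⟩
    simp [hL, ← hj0]
  have hbdd : BddAbove C := BddAbove.mono Set.inter_subset_left bddAbove_Icc
  set c := sSup C with hc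
  have hcC : c ∈ C := hCclosed.csSup_mem ⟨0, h0C⟩ hbdd
  obtain ⟨hcIcc, hcU⟩ := hcC
  obtain ⟨i₀, hi₀u, hi₀c⟩ := Set.mem_iUnion.1 hcU
  by_cases hc1 : c = 1
  · refine ⟨i₀, hi₀u, ?_⟩
    have : L i₀ 1 = v i₀ := by simp [hL]
    rw [← this, ← hc1]
    exact hi₀c
  have hclt : c < 1 := lt_of_le_of_ne hcIcc.2 hc1
  -- beyond c, all admissible lines are strictly above F
  have key : ∀ t, c < t → t ≤ 1 → ∀ j, F 0 ≤ u j → F t < L j t := by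
    intro t hct ht1 j hju
    by_contra h
    push_neg at h
    have htC : t ∈ C := ⟨⟨le_trans hcIcc.1 hct.le, ht1⟩, Set.mem_iUnion.2 ⟨j, hju, h⟩⟩
    exact absurd (le_csSup hbdd htC) (not_le.2 hct)
  -- find a line active just to the right of c
  have hcover : Set.Ioc c 1 ⊆ ⋃ j, (Set.Ioc c 1 ∩ {t | F t = L j t}) := by
    intro t ht
    obtain ⟨j, hj⟩ := hsel t ⟨le_trans hcIcc.1 ht.1.le, ht.2⟩
    exact Set.mem_iUnion.2 ⟨j, ht, hj⟩
  have hcc : c ∈ closure (Set.Ioc c 1) := by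
    rw [closure_Ioc hc1]
    exact ⟨le_refl c, hclt.le⟩
  have hcc2 : c ∈ ⋃ j, closure (Set.Ioc c 1 ∩ {t | F t = L j t}) := by
    have h1 : c ∈ closure (⋃ j, (Set.Ioc c 1 ∩ {t | F t = L j t})) :=
      closure_mono hcover hcc
    have h2 : closure (⋃ j, (Set.Ioc c 1 ∩ {t | F t = L j t})) =
        ⋃ j, closure (Set.Ioc c 1 ∩ {t | F t = L j t}) := by
      rw [← Set.biUnion_univ, Set.Finite.closure_biUnion Set.finite_univ, Set.biUnion_univ]
    rwa [h2] at h1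
  obtain ⟨j₁, hj₁⟩ := Set.mem_iUnion.1 hcc2
  have hDclosed : IsClosed {t | F t = L j₁ t} := isClosed_eq hF (hLc j₁)
  have hcD : F c = L j₁ c := by
    have h3 : c ∈ {t | F t = L j₁ t} := by
      have := closure_mono (Set.inter_subset_right (s := Set.Ioc c 1)
        (t := {t | F t = L j₁ t})) hj₁
      rwa [hDclosed.closure_eq] at this
    exact h3
  obtain ⟨t₁, ht₁⟩ : (Set.Ioc c 1 ∩ {t | F t = L j₁ t}).Nonempty := by
    by_contra h
    rw [Set.not_nonempty_iff_eq_empty] at h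
    rw [h, closure_empty] at hj₁
    exact hj₁
  obtain ⟨⟨hct₁, ht₁1⟩, ht₁D⟩ := ht₁
  -- slope comparison
  have hc0 : (0:ℝ) ≤ c := hcIcc.1
  have hA : L i₀ c ≤ L j₁ c := hcD ▸ hi₀c
  have hB : L j₁ t₁ < L i₀ t₁ := ht₁D ▸ key t₁ hct₁ ht₁1 i₀ hi₀u
  have hslope : v j₁ - u j₁ < v i₀ - u i₀ := by
    simp only [hL] at hA hB
    nlinarith [sub_pos.2 hct₁]
  have hu1 : u i₀ ≤ u j₁ := by
    simp only [hL] at hA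
    nlinarith
  have hj₁u : F 0 ≤ u j₁ := le_trans hi₀u hu1
  exact absurd (key t₁ hct₁ ht₁1 j₁ hj₁u) (by rw [ht₁D]; exact lt_irrefl _)

def bigOr {n : ℕ} (l : List ((Fin n → UI) → UI)) : (Fin n → UI) → UI :=
  l.foldr (fun g h x => maxUI (g x) (h x)) (fun _ => zeroUI)

def bigAnd {n : ℕ} (l : List ((Fin n → UI) → UI)) : (Fin n → UI) → UI :=
  l.foldr (fun g h x => minUI (g x) (h x)) (fun _ => mneg zeroUI)

lemma isTerm_bigOr {n : ℕ} {l : List ((Fin n → UI) → UI)} (h : ∀ g ∈ l, IsTerm n g) :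
    IsTerm n (bigOr l) := by
  induction l with
  | nil => exact IsTerm.zero
  | cons g l IH =>
    exact isTerm_maxUI (h g List.mem_cons_self) (IH fun g' hg' => h g' (List.mem_cons_of_mem _ hg'))

lemma isTerm_bigAnd {n : ℕ} {l : List ((Fin n → UI) → UI)} (h : ∀ g ∈ l, IsTerm n g) :
    IsTerm n (bigAnd l) := by
  induction l with
  | nil => exact IsTerm.neg IsTerm.zero
  | cons g l IH =>
    exact isTerm_minUI (h g List.mem_cons_self) (IH fun g' hg' => h g' (List.mem_cons_of_mem _ hg'))

lemma bigOr_le {n : ℕ} {l : List ((Fin n → UI) → UI)} {c : UI} {x : Fin n → UI}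
    (h : ∀ g ∈ l, g x ≤ c) : bigOr l x ≤ c := by
  induction l with
  | nil => exact zeroUI_le c
  | cons g l IH =>
    show maxUI (g x) (bigOr l x) ≤ c
    rw [UI.le_iff, maxUI_val]
    exact max_le (h g List.mem_cons_self) (IH fun g' hg' => h g' (List.mem_cons_of_mem _ hg'))

lemma le_bigOr {n : ℕ} {l : List ((Fin n → UI) → UI)} {g : (Fin n → UI) → UI}
    (hg : g ∈ l) (x : Fin n → UI) : g x ≤ bigOr l x := by
  induction l with
  | nil => exact absurd hg List.not_mem_nil
  | cons g' l IH =>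
    show _ ≤ maxUI (g' x) (bigOr l x)
    rw [UI.le_iff, maxUI_val]
    rcases List.mem_cons.1 hg with h | h
    · subst h; exact le_max_left _ _
    · exact le_trans (IH h) (le_max_right _ _)

lemma le_bigAnd {n : ℕ} {l : List ((Fin n → UI) → UI)} {c : UI} {x : Fin n → UI}
    (h : ∀ g ∈ l, c ≤ g x) : c ≤ bigAnd l x := by
  induction l with
  | nil => exact le_oneUI c
  | cons g l IH =>
    show c ≤ minUI (g x) (bigAnd l x)
    rw [UI.le_iff, minUI_val]
    exact le_min (h g List.mem_cons_self) (IH fun g' hg' => h g' (List.mem_cons_of_mem _ hg'))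

lemma bigAnd_le {n : ℕ} {l : List ((Fin n → UI) → UI)} {g : (Fin n → UI) → UI}
    (hg : g ∈ l) (x : Fin n → UI) : bigAnd l x ≤ g x := by
  induction l with
  | nil => exact absurd hg List.not_mem_nil
  | cons g' l IH =>
    show minUI (g' x) (bigAnd l x) ≤ _
    rw [UI.le_iff, minUI_val]
    rcases List.mem_cons.1 hg with h | h
    · subst h; exact min_le_left _ _
    · exact le_trans (min_le_right _ _) (IH h)

theorem stmt10 (n : ℕ) (f : (Fin n → UI) → UI) (hf : Continuous f)
    (k : ℕ) (c₀ : Fin k → ℤ) (c : Fin k → Fin n → ℤ)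
    (hcons : ∀ x, ∃ j : Fin k, (f x).1 = lin (c₀ j) (c j) x) :
    IsTerm n f := by
  classical
  set G : Fin k → (Fin n → UI) → UI := fun j x => sharp (lin (c₀ j) (c j) x) with hGdef
  have hG : ∀ j, IsTerm n (G j) := fun j => sharpLin_isTerm _ (c j) rfl (c₀ j)
  -- the pair lemma
  have pair : ∀ x y : Fin n → UI, ∃ j, f x ≤ G j x ∧ G j y ≤ f y := by
    intro x y
    set σ : ℝ → ℝ := fun t => max 0 (min t 1) with hσ
    have hσc : Continuous σ := continuous_const.max (continuous_id.min continuous_const)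
    have hσ0 : ∀ t, 0 ≤ σ t := fun t => le_max_left _ _
    have hσ1 : ∀ t, σ t ≤ 1 := fun t => max_le zero_le_one (min_le_right _ _)
    set p : ℝ → (Fin n → UI) := fun t i =>
      ⟨(1 - σ t) * (x i).1 + σ t * (y i).1, by
        constructor
        · exact add_nonneg (mul_nonneg (by linarith [hσ1 t]) (x i).2.1)
            (mul_nonneg (hσ0 t) (y i).2.1)
        · nlinarith [hσ0 t, hσ1 t, (x i).2.1, (x i).2.2, (y i).2.1, (y i).2.2]⟩ with hp
    have hpc : Continuous p := by
      apply continuous_pi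
      intro i
      apply Continuous.subtype_mk
      exact ((continuous_const.sub hσc).mul continuous_const).add (hσc.mul continuous_const)
    set F : ℝ → ℝ := fun t => (f (p t)).1 with hFdef
    have hFc : Continuous F := continuous_subtype_val.comp (hf.comp hpc)
    set uu : Fin k → ℝ := fun j => lin (c₀ j) (c j) x with huu
    set vv : Fin k → ℝ := fun j => lin (c₀ j) (c j) y with hvv
    have hsel : ∀ t ∈ Set.Icc (0:ℝ) 1, ∃ j, F t = (1 - t) * uu j + t * vv j := by
      intro t ht
      have hσt : σ t = t := by
        simp only [hσ]
        rw [min_eq_left ht.2, max_eq_right ht.1]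
      obtain ⟨j, hj⟩ := hcons (p t)
      refine ⟨j, ?_⟩
      show (f (p t)).1 = _
      rw [hj]
      simp only [lin, huu, hvv, hp, hσt]
      have hsum : ∑ i, (c j i : ℝ) * ((1 - t) * (x i).1 + t * (y i).1)
          = (1 - t) * ∑ i, (c j i : ℝ) * (x i).1 + t * ∑ i, (c j i : ℝ) * (y i).1 := by
        rw [Finset.mul_sum, Finset.mul_sum, ← Finset.sum_add_distrib]
        exact Finset.sum_congr rfl (fun i _ => by ring)
      rw [hsum]; ring
    obtain ⟨j, hju, hjv⟩ := oneDim F hFc uu vv hsel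
    have hσz : σ 0 = 0 := by
      simp only [hσ]; rw [min_eq_left zero_le_one, max_self]
    have hσo : σ 1 = 1 := by
      simp only [hσ]; rw [min_self, max_eq_right zero_le_one]
    have hp0 : p 0 = x := by
      funext i; apply Subtype.ext; simp [hp, hσz]
    have hp1 : p 1 = y := by
      funext i; apply Subtype.ext; simp [hp, hσo]
    have hF0 : F 0 = (f x).1 := by rw [hFdef]; simp [hp0]
    have hF1 : F 1 = (f y).1 := by rw [hFdef]; simp [hp1]
    refine ⟨j, ?_, ?_⟩
    · calc f x = sharp ((f x).1) := (sharp_eq_self _).symm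
        _ ≤ sharp (uu j) := sharp_mono (by rw [← hF0]; exact hju)
        _ = G j x := rfl
    · calc G j y = sharp (vv j) := rfl
        _ ≤ sharp ((f y).1) := sharp_mono (by rw [← hF1]; exact hjv)
        _ = f y := sharp_eq_self _
  -- assembly
  set P : Finset (Fin k) → Prop := fun S => ∀ y, bigAnd (S.toList.map G) y ≤ f y with hP
  set Big := bigOr ((Finset.univ.filter P).toList.map (fun S => bigAnd (S.toList.map G)))
    with hBig
  have hfB : f = Big := by
    funext x
    apply le_antisymm
    · set Sx : Finset (Fin k) := Finset.univ.filter (fun j => f x ≤ G j x) with hSx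
      have hPSx : P Sx := by
        intro y
        obtain ⟨j, hjx, hjy⟩ := pair x y
        have hmem : G j ∈ Sx.toList.map G :=
          List.mem_map.2 ⟨j, Finset.mem_toList.2 (Finset.mem_filter.2 ⟨Finset.mem_univ j, hjx⟩), rfl⟩
        exact le_trans (bigAnd_le hmem y) hjy
      have h1 : f x ≤ bigAnd (Sx.toList.map G) x := by
        apply le_bigAnd
        intro g hg
        obtain ⟨j, hj, rfl⟩ := List.mem_map.1 hg
        exact (Finset.mem_filter.1 (Finset.mem_toList.1 hj)).2
      refine le_trans h1 (le_bigOr ?_ x)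
      exact List.mem_map.2 ⟨Sx, Finset.mem_toList.2 (Finset.mem_filter.2
        ⟨Finset.mem_univ Sx, hPSx⟩), rfl⟩
    · apply bigOr_le
      intro g hg
      obtain ⟨S, hS, rfl⟩ := List.mem_map.1 hg
      exact (Finset.mem_filter.1 (Finset.mem_toList.1 hS)).2 x
  rw [hfB]
  apply isTerm_bigOr
  intro g hg
  obtain ⟨S, _, rfl⟩ := List.mem_map.1 hg
  apply isTerm_bigAnd
  intro g' hg'
  obtain ⟨j, _, rfl⟩ := List.mem_map.1 hg'
  exact hG j
end
end

section
/- Let T₁, T₂ be finitely generated ideals of the MV-algebra Aₙ of term functions on [0,1]ⁿ, and let h, h' ∈ Aₙ. If h(x) = h'(x) for all x in Z(T₁) ∩ Z(T₂) (the common zero set), then d(h, h') := (h ⊖ h') ⊕ (h' ⊖ h) belongs to the ideal generated by T₁ ∪ T₂. -/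
noncomputable section

/-- Membership in the ideal of term functions generated by a set S. -/
def InIdealGen (n : ℕ) (S : Set ((Fin n → UI) → UI)) (g : (Fin n → UI) → UI) : Prop :=
  IsTerm n g ∧ ∃ l : List ((Fin n → UI) → UI), (∀ s ∈ l, s ∈ S) ∧
    ∀ x, (g x).1 ≤ ((l.foldr (fun p q => fun x => oplus (p x) (q x)) (fun _ => zeroUI)) x).1

open scoped Classical

abbrev Aff (n : ℕ) : Type := (Fin n → ℝ) × ℝ

def aeval {n : ℕ} (a : Aff n) (x : Fin n → ℝ) : ℝ := (∑ i, a.1 i * x i) + a.2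

lemma aeval_combo {n : ℕ} (a : Aff n) (x y : Fin n → ℝ) {α β : ℝ} (hab : α + β = 1) :
    aeval a (α • x + β • y) = α * aeval a x + β * aeval a y := by
  simp only [aeval, Pi.add_apply, Pi.smul_apply, smul_eq_mul]
  rw [Finset.sum_congr rfl (fun i _ => by ring :
    ∀ i ∈ Finset.univ, a.1 i * (α * x i + β * y i) = α * (a.1 i * x i) + β * (a.1 i * y i))]
  rw [Finset.sum_add_distrib, ← Finset.mul_sum, ← Finset.mul_sum]
  linear_combination (-a.2) * hab

lemma aeval_continuous {n : ℕ} (a : Aff n) : Continuous (aeval a) := by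
  unfold aeval; fun_prop

def region {n : ℕ} (c : List (Aff n)) : Set (Fin n → ℝ) :=
  {x | ∀ a ∈ c, aeval a x ≤ 0}

lemma region_convex {n : ℕ} (c : List (Aff n)) : Convex ℝ (region c) := by
  intro x hx y hy α β ha hb hab
  intro a hac
  rw [aeval_combo a x y hab]
  nlinarith [hx a hac, hy a hac]

lemma region_closed {n : ℕ} (c : List (Aff n)) : IsClosed (region c) := by
  have : region c = ⋂ a ∈ c, {x | aeval a x ≤ 0} := by
    ext x; simp [region]
  rw [this]
  exact isClosed_biInter fun a _ => isClosed_le (aeval_continuous a) continuous_const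

def cubeCons (n : ℕ) : List (Aff n) :=
  (List.finRange n).flatMap (fun i => [(Pi.single i (1:ℝ), -1), (Pi.single i (-1:ℝ), 0)])

lemma mem_cubeCons (n : ℕ) (a : Aff n) : a ∈ cubeCons n ↔
    ∃ i, a = (Pi.single i (1:ℝ), -1) ∨ a = (Pi.single i (-1:ℝ), 0) := by
  simp only [cubeCons, List.mem_flatMap, List.mem_cons, List.mem_singleton, List.mem_finRange,
    true_and]
  simp

lemma aeval_single {n : ℕ} (i : Fin n) (c b : ℝ) (x : Fin n → ℝ) :
    aeval (Pi.single i c, b) x = c * x i + b := by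
  simp only [aeval]
  congr 1
  rw [Finset.sum_eq_single i]
  · simp
  · intro j _ hj; simp [Pi.single_apply, hj]
  · simp

lemma mem_region_cubeCons {n : ℕ} (x : Fin n → ℝ) :
    x ∈ region (cubeCons n) ↔ ∀ i, x i ∈ Set.Icc (0:ℝ) 1 := by
  constructor
  · intro hx i
    have h1 := hx (Pi.single i (1:ℝ), -1) ((mem_cubeCons n _).2 ⟨i, Or.inl rfl⟩)
    have h2 := hx (Pi.single i (-1:ℝ), 0) ((mem_cubeCons n _).2 ⟨i, Or.inr rfl⟩)
    rw [aeval_single] at h1 h2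
    constructor <;> linarith
  · intro hx a ha
    obtain ⟨i, hi | hi⟩ := (mem_cubeCons n a).1 ha <;> subst hi <;> rw [aeval_single]
    · linarith [(hx i).2]
    · linarith [(hx i).1]

lemma region_append {n : ℕ} (c d : List (Aff n)) :
    region (c ++ d) = region c ∩ region d := by
  ext x; simp [region, or_imp, forall_and]

/-- small-epsilon helper -/
lemma eps_helper {α : Type*} (l : List α) (f g : α → ℝ) :
    ∃ ε : ℝ, 0 < ε ∧ ∀ a ∈ l, f a < 0 → f a + ε * g a < 0 := by
  induction l with
  | nil => exact ⟨1, one_pos, by simp⟩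
  | cons a l ih =>
    obtain ⟨ε, hε, hl⟩ := ih
    by_cases hfa : f a < 0
    · by_cases hga : g a ≤ 0
      · refine ⟨ε, hε, ?_⟩
        intro b hb hfb
        rcases List.mem_cons.1 hb with rfl | hb
        · nlinarith
        · exact hl b hb hfb
      · push_neg at hga
        have hδ : 0 < (-f a) / (2 * g a) := div_pos (by linarith) (by linarith)
        refine ⟨min ε ((-f a) / (2 * g a)), lt_min hε hδ, ?_⟩
        intro b hb hfb
        rcases List.mem_cons.1 hb with rfl | hb
        · have h1 : min ε ((-f b) / (2 * g b)) ≤ (-f b) / (2 * g b) := min_le_right _ _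
          have h2 : min ε ((-f b) / (2 * g b)) * g b ≤ ((-f b) / (2 * g b)) * g b :=
            mul_le_mul_of_nonneg_right h1 (le_of_lt hga)
          have h3 : ((-f b) / (2 * g b)) * g b = -f b / 2 := by field_simp
          nlinarith
        · have h1 : min ε ((-f a) / (2 * g a)) ≤ ε := min_le_left _ _
          have := hl b hb hfb
          by_cases hgb : g b ≤ 0
          · nlinarith [lt_min hε hδ]
          · push_neg at hgb; nlinarith
    · refine ⟨ε, hε, ?_⟩
      intro b hb hfb
      rcases List.mem_cons.1 hb with rfl | hb
      · exact absurd hfb hfa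
      · exact hl b hb hfb

/-- the extreme points of a polyhedral region are finite -/
lemma region_extremePoints_finite {n : ℕ} (c : List (Aff n)) :
    ((region c).extremePoints ℝ).Finite := by
  classical
  set F : (Fin n → ℝ) → Finset (Fin c.length) :=
    fun x => Finset.univ.filter (fun i : Fin c.length => aeval (c.get i) x = 0) with hF
  have hinj : Set.InjOn F ((region c).extremePoints ℝ) := by
    intro x hx y hy hxy
    by_contra hne
    -- x is extreme; construct z = x + ε(x - y) ∈ region c, with x ∈ openSegment z y
    obtain ⟨ε, hε, hεp⟩ := eps_helper c (fun a => aeval a x) (fun a => aeval a x - aeval a y)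
    set z : Fin n → ℝ := (1 + ε) • x + (-ε) • y with hz
    have hzval : ∀ a : Aff n, aeval a z = aeval a x + ε * (aeval a x - aeval a y) := by
      intro a
      have := aeval_combo a x y (α := 1 + ε) (β := -ε) (by ring)
      rw [← hz] at this
      rw [this]; ring
    have hzR : z ∈ region c := by
      intro a hac
      rw [hzval a]
      rcases lt_or_eq_of_le ((mem_extremePoints.1 hx).1 a hac) with hlt | heq0
      · exact le_of_lt (hεp a hac hlt)
      · -- a is active at x; show also active at y
        obtain ⟨i, rfl⟩ : ∃ i : Fin c.length, c.get i = a := List.get_of_mem hac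
        have hiF : i ∈ F x := by simp [hF, ← heq0]
        rw [hxy] at hiF
        have hay : aeval (c.get i) y = 0 := by simpa [hF] using hiF
        simp only [List.get_eq_getElem] at heq0 hay ⊢
        rw [heq0, hay]
        norm_num
    -- x ∈ openSegment z y
    have hmem : x ∈ openSegment ℝ z y := by
      refine ⟨1 / (1 + ε), ε / (1 + ε), by positivity, by positivity, ?_, ?_⟩
      · field_simp
      · rw [hz]
        ext i
        simp only [Pi.add_apply, Pi.smul_apply, smul_eq_mul]
        field_simp
        try ring
    obtain ⟨hxA, hxE⟩ := mem_extremePoints.1 hx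
    have := (hxE z hzR y (mem_extremePoints.1 hy).1 hmem).2
    exact hne (this ▸ rfl)
  exact Set.Finite.of_finite_image (Set.toFinite _) hinj

lemma region_cube_isCompact {n : ℕ} (c : List (Aff n)) :
    IsCompact (region (cubeCons n ++ c)) := by
  have hsub : region (cubeCons n ++ c) ⊆ Set.pi Set.univ (fun _ : Fin n => Set.Icc (0:ℝ) 1) := by
    intro x hx
    rw [region_append] at hx
    intro i _
    exact (mem_region_cubeCons x).1 hx.1 i
  exact (isCompact_univ_pi fun _ => isCompact_Icc).of_isClosed_subset (region_closed _) hsub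

lemma region_eq_convexHull {n : ℕ} (c : List (Aff n)) :
    region (cubeCons n ++ c) =
      convexHull ℝ ((region (cubeCons n ++ c)).extremePoints ℝ) := by
  have h := closure_convexHull_extremePoints (region_cube_isCompact c) (region_convex _)
  have h2 : IsClosed (convexHull ℝ ((region (cubeCons n ++ c)).extremePoints ℝ)) :=
    ((region_extremePoints_finite _).isCompact_convexHull (𝕜 := ℝ)).isClosed
  rw [← h2.closure_eq, h]

/-- the per-cell vertex bound -/
lemma cell_lemma {n : ℕ} (c : List (Aff n)) (p q : Aff n)
    (hq0 : ∀ x ∈ region (cubeCons n ++ c), 0 ≤ aeval q x)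
    (hzero : ∀ x ∈ region (cubeCons n ++ c), aeval q x = 0 → aeval p x = 0) :
    ∃ k : ℝ, 0 ≤ k ∧ ∀ x ∈ region (cubeCons n ++ c), aeval p x ≤ k * aeval q x := by
  classical
  set R := region (cubeCons n ++ c) with hR
  have hVfin := region_extremePoints_finite (cubeCons n ++ c)
  set Vf : Finset (Fin n → ℝ) := hVfin.toFinset with hVf
  -- a bound on the vertices
  have hvtx : ∀ s : Finset (Fin n → ℝ), (∀ v ∈ s, v ∈ R) →
      ∃ k : ℝ, 0 ≤ k ∧ ∀ v ∈ s, aeval p v ≤ k * aeval q v := by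
    intro s
    induction s using Finset.induction with
    | empty => exact fun _ => ⟨0, le_refl 0, by simp⟩
    | insert _ _ hvnot ih =>
      rename_i v s
      intro hmem
      obtain ⟨k, hk0, hk⟩ := ih (fun w hw => hmem w (Finset.mem_insert_of_mem hw))
      have hvR : v ∈ R := hmem v (Finset.mem_insert_self v s)
      rcases eq_or_lt_of_le (hq0 v hvR) with hq | hq
      · refine ⟨k, hk0, ?_⟩
        intro w hw
        rcases Finset.mem_insert.1 hw with rfl | hw
        · simp [hzero w hvR hq.symm, ← hq]
        · exact hk w hw
      · refine ⟨max k (aeval p v / aeval q v), le_trans hk0 (le_max_left _ _), ?_⟩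
        intro w hw
        rcases Finset.mem_insert.1 hw with rfl | hw
        · have h1 : aeval p w / aeval q w ≤ max k (aeval p w / aeval q w) := le_max_right _ _
          have := mul_le_mul_of_nonneg_right h1 (le_of_lt hq)
          calc aeval p w = (aeval p w / aeval q w) * aeval q w := by field_simp
          _ ≤ _ := this
        · have := hk w hw
          have h2 := mul_le_mul_of_nonneg_right (le_max_left k (aeval p v / aeval q v))
            (hq0 w (hmem w (Finset.mem_insert_of_mem hw)))
          linarith
  obtain ⟨k, hk0, hk⟩ := hvtx Vf (fun v hv => by
    have : v ∈ (R.extremePoints ℝ) := by rwa [hVf, Set.Finite.mem_toFinset] at hv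
    exact extremePoints_subset this)
  refine ⟨k, hk0, ?_⟩
  -- the sublevel set is convex and contains the extreme points
  set a' : Aff n := (fun i => p.1 i - k * q.1 i, p.2 - k * q.2) with ha'
  have ha'val : ∀ x, aeval a' x = aeval p x - k * aeval q x := by
    intro x
    simp only [aeval, ha']
    rw [Finset.sum_congr rfl (fun i _ => by ring :
      ∀ i ∈ Finset.univ, (p.1 i - k * q.1 i) * x i = p.1 i * x i - k * (q.1 i * x i))]
    rw [Finset.sum_sub_distrib, ← Finset.mul_sum]
    ring
  intro x hx
  have hsub2 : R ⊆ {y | aeval a' y ≤ 0} := by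
    rw [hR, region_eq_convexHull]
    apply convexHull_min
    · intro v hv
      have hv' : aeval p v ≤ k * aeval q v := hk v (by rwa [hVf, Set.Finite.mem_toFinset])
      simp only [Set.mem_setOf_eq, ha'val]
      linarith
    · have hconv : {y | aeval a' y ≤ 0} = region [a'] := by
        ext y; simp [region]
      rw [hconv]
      exact region_convex _
  have hle := hsub2 hx
  rw [Set.mem_setOf_eq, ha'val] at hle
  linarith

def emb {n : ℕ} (x : Fin n → UI) : Fin n → ℝ := fun i => (x i).1

/-- affine ops -/
def sumAff {n : ℕ} (p q : Aff n) : Aff n := (fun i => p.1 i + q.1 i, p.2 + q.2)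
def negAff {n : ℕ} (p : Aff n) : Aff n := (fun i => -(p.1 i), 1 - p.2)
def oneAff (n : ℕ) : Aff n := (fun _ => 0, 1)
def zeroAff (n : ℕ) : Aff n := (fun _ => 0, 0)

lemma aeval_sumAff {n : ℕ} (p q : Aff n) (x : Fin n → ℝ) :
    aeval (sumAff p q) x = aeval p x + aeval q x := by
  simp only [aeval, sumAff]
  rw [Finset.sum_congr rfl (fun i _ => by ring :
    ∀ i ∈ Finset.univ, (p.1 i + q.1 i) * x i = p.1 i * x i + q.1 i * x i)]
  rw [Finset.sum_add_distrib]; ring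

lemma aeval_negAff {n : ℕ} (p : Aff n) (x : Fin n → ℝ) :
    aeval (negAff p) x = 1 - aeval p x := by
  simp only [aeval, negAff]
  rw [Finset.sum_congr rfl (fun i _ => by ring :
    ∀ i ∈ Finset.univ, -(p.1 i) * x i = -(p.1 i * x i))]
  rw [Finset.sum_neg_distrib]; ring

lemma aeval_oneAff {n : ℕ} (x : Fin n → ℝ) : aeval (oneAff n) x = 1 := by
  simp [aeval, oneAff]

lemma aeval_zeroAff {n : ℕ} (x : Fin n → ℝ) : aeval (zeroAff n) x = 0 := by
  simp [aeval, zeroAff]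

/-- shifted affine p + c (constant) -/
def shiftAff {n : ℕ} (p : Aff n) (c : ℝ) : Aff n := (p.1, p.2 + c)
lemma aeval_shiftAff {n : ℕ} (p : Aff n) (c : ℝ) (x : Fin n → ℝ) :
    aeval (shiftAff p c) x = aeval p x + c := by
  simp [aeval, shiftAff]; ring

def HasPres {n : ℕ} (f : (Fin n → UI) → UI) : Prop :=
  ∃ L : List (List (Aff n) × Aff n),
    (∀ x : Fin n → UI, ∃ P ∈ L, emb x ∈ region P.1) ∧
    (∀ P ∈ L, ∀ x : Fin n → UI, emb x ∈ region P.1 → (f x).1 = aeval P.2 (emb x))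

lemma hasPres_of_isTerm {n : ℕ} {f : (Fin n → UI) → UI} (hf : IsTerm n f) : HasPres f := by
  induction hf with
  | proj i =>
    refine ⟨[([], (Pi.single i (1:ℝ), 0))], fun x => ⟨_, List.mem_singleton_self _, ?_⟩, ?_⟩
    · intro a ha; simp at ha
    · intro P hP x _
      rw [List.mem_singleton] at hP
      subst hP
      rw [aeval_single]
      simp [emb]
  | zero =>
    refine ⟨[([], zeroAff n)], fun x => ⟨_, List.mem_singleton_self _, ?_⟩, ?_⟩
    · intro a ha; simp at ha
    · intro P hP x _
      rw [List.mem_singleton] at hP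
      subst hP
      rw [aeval_zeroAff]
      simp [zeroUI]
  | neg hf ih =>
    obtain ⟨L, hcov, hval⟩ := ih
    refine ⟨L.map (fun P => (P.1, negAff P.2)), ?_, ?_⟩
    · intro x
      obtain ⟨P, hP, hxP⟩ := hcov x
      exact ⟨(P.1, negAff P.2), List.mem_map_of_mem hP, hxP⟩
    · intro P hP x hxP
      obtain ⟨Q, hQ, rfl⟩ := List.mem_map.1 hP
      rw [aeval_negAff]
      have := hval Q hQ x hxP
      simp only [mneg]
      rw [this]
  | add hf hg ihf ihg =>
    obtain ⟨L₁, hcov₁, hval₁⟩ := ihf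
    obtain ⟨L₂, hcov₂, hval₂⟩ := ihg
    refine ⟨L₁.flatMap (fun P => L₂.flatMap (fun Q =>
      [(P.1 ++ Q.1 ++ [shiftAff (sumAff P.2 Q.2) (-1)], sumAff P.2 Q.2),
       (P.1 ++ Q.1 ++ [negAff (sumAff P.2 Q.2)], oneAff n)])), ?_, ?_⟩
    · intro x
      obtain ⟨P, hP, hxP⟩ := hcov₁ x
      obtain ⟨Q, hQ, hxQ⟩ := hcov₂ x
      rcases le_total (aeval (sumAff P.2 Q.2) (emb x)) 1 with hle | hge
      · refine ⟨(P.1 ++ Q.1 ++ [shiftAff (sumAff P.2 Q.2) (-1)], sumAff P.2 Q.2), ?_, ?_⟩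
        · simp only [List.mem_flatMap]
          exact ⟨P, hP, Q, hQ, by simp⟩
        · rw [region_append, region_append]
          refine ⟨⟨hxP, hxQ⟩, ?_⟩
          intro a ha
          rw [List.mem_singleton] at ha
          subst ha
          rw [aeval_shiftAff]
          linarith
      · refine ⟨(P.1 ++ Q.1 ++ [negAff (sumAff P.2 Q.2)], oneAff n), ?_, ?_⟩
        · simp only [List.mem_flatMap]
          exact ⟨P, hP, Q, hQ, by simp⟩
        · rw [region_append, region_append]
          refine ⟨⟨hxP, hxQ⟩, ?_⟩
          intro a ha
          rw [List.mem_singleton] at ha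
          subst ha
          rw [aeval_negAff]
          linarith
    · intro P hP x hxP
      simp only [List.mem_flatMap, List.mem_cons, List.mem_singleton] at hP
      obtain ⟨P₁, hP₁, Q₁, hQ₁, hcase⟩ := hP
      rcases hcase with rfl | rfl | hfalse
      · rw [region_append, region_append] at hxP
        obtain ⟨⟨hx1, hx2⟩, hx3⟩ := hxP
        have hc := hx3 _ (List.mem_singleton_self _)
        rw [aeval_shiftAff] at hc
        rw [aeval_sumAff, ← hval₁ P₁ hP₁ x hx1, ← hval₂ Q₁ hQ₁ x hx2]
        simp only [oplus]
        rw [min_eq_left]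
        rw [aeval_sumAff, ← hval₁ P₁ hP₁ x hx1, ← hval₂ Q₁ hQ₁ x hx2] at hc
        linarith
      · rw [region_append, region_append] at hxP
        obtain ⟨⟨hx1, hx2⟩, hx3⟩ := hxP
        have hc := hx3 _ (List.mem_singleton_self _)
        rw [aeval_negAff, aeval_sumAff, ← hval₁ P₁ hP₁ x hx1, ← hval₂ Q₁ hQ₁ x hx2] at hc
        rw [aeval_oneAff]
        simp only [oplus]
        rw [min_eq_right]
        linarith
      · simp at hfalse

lemma combine_bounds {α : Type*} {n : ℕ} (l : List α)
    (P Q : α → (Fin n → ℝ) → ℝ) (R : α → Set (Fin n → ℝ))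
    (hB : ∀ a ∈ l, ∀ x ∈ R a, 0 ≤ Q a x)
    (h : ∀ a ∈ l, ∃ k : ℝ, 0 ≤ k ∧ ∀ x ∈ R a, P a x ≤ k * Q a x) :
    ∃ k : ℝ, 0 ≤ k ∧ ∀ a ∈ l, ∀ x ∈ R a, P a x ≤ k * Q a x := by
  induction l with
  | nil => exact ⟨0, le_refl 0, by simp⟩
  | cons a l ih =>
    obtain ⟨k, hk0, hk⟩ := ih (fun b hb => hB b (List.mem_cons_of_mem a hb))
      (fun b hb => h b (List.mem_cons_of_mem a hb))
    obtain ⟨ka, hka0, hka⟩ := h a List.mem_cons_self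
    refine ⟨max k ka, le_trans hk0 (le_max_left _ _), ?_⟩
    intro b hb x hx
    rcases List.mem_cons.1 hb with rfl | hb
    · have := hka x hx
      have h2 := mul_le_mul_of_nonneg_right (le_max_right k ka)
        (hB b List.mem_cons_self x hx)
      linarith
    · have := hk b hb x hx
      have h2 := mul_le_mul_of_nonneg_right (le_max_left k ka)
        (hB b (List.mem_cons_of_mem a hb) x hx)
      linarith

lemma emb_mem_cube {n : ℕ} (x : Fin n → UI) : emb x ∈ region (cubeCons n) :=
  (mem_region_cubeCons (emb x)).2 fun i => (x i).2

/-- main bound: if g's zero set is inside f's zero set, f ≤ k g pointwise -/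
lemma main_bound {n : ℕ} (f g : (Fin n → UI) → UI) (hf : HasPres f) (hg : HasPres g)
    (hZ : ∀ x, (g x).1 = 0 → (f x).1 = 0) :
    ∃ k : ℕ, ∀ x, (f x).1 ≤ (k : ℝ) * (g x).1 := by
  obtain ⟨L₁, hcov₁, hval₁⟩ := hf
  obtain ⟨L₂, hcov₂, hval₂⟩ := hg
  -- index type: pairs from L₁ × L₂
  set l : List ((List (Aff n) × Aff n) × (List (Aff n) × Aff n)) := L₁.product L₂ with hl
  have key : ∀ PQ ∈ l, ∀ x ∈ region (cubeCons n ++ (PQ.1.1 ++ PQ.2.1)),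
      (0 ≤ aeval PQ.2.2 x) ∧ (aeval PQ.2.2 x = 0 → aeval PQ.1.2 x = 0) := by
    intro PQ hPQ x hx
    have hmem := List.mem_product.1 hPQ
    rw [region_append, region_append] at hx
    obtain ⟨hxc, hxP, hxQ⟩ := hx
    set x' : Fin n → UI := fun i => ⟨x i, (mem_region_cubeCons x).1 hxc i⟩ with hx'
    have hex : emb x' = x := rfl
    have hgval : (g x').1 = aeval PQ.2.2 x := by
      rw [← hex] at hxQ ⊢
      exact hval₂ PQ.2 hmem.2 x' hxQ
    have hfval : (f x').1 = aeval PQ.1.2 x := by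
      rw [← hex] at hxP ⊢
      exact hval₁ PQ.1 hmem.1 x' hxP
    constructor
    · rw [← hgval]; exact (g x').2.1
    · intro hq0
      rw [← hfval]
      exact hZ x' (by rw [hgval]; exact hq0)
  obtain ⟨k, hk0, hk⟩ := combine_bounds l (fun PQ => aeval PQ.1.2) (fun PQ => aeval PQ.2.2)
      (fun PQ => region (cubeCons n ++ (PQ.1.1 ++ PQ.2.1)))
      (fun PQ hPQ x hx => (key PQ hPQ x hx).1)
      (fun PQ hPQ => cell_lemma _ _ _
        (fun x hx => (key PQ hPQ x hx).1) (fun x hx => (key PQ hPQ x hx).2))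
  refine ⟨⌈k⌉₊, ?_⟩
  intro x
  obtain ⟨P, hP, hxP⟩ := hcov₁ x
  obtain ⟨Q, hQ, hxQ⟩ := hcov₂ x
  have hPQl : (P, Q) ∈ l := List.mem_product.2 ⟨hP, hQ⟩
  have hxR : emb x ∈ region (cubeCons n ++ (P.1 ++ Q.1)) := by
    rw [region_append, region_append]
    exact ⟨emb_mem_cube x, hxP, hxQ⟩
  have h1 := hk (P, Q) hPQl (emb x) hxR
  have h2 : (f x).1 = aeval P.2 (emb x) := hval₁ P hP x hxP
  have h3 : (g x).1 = aeval Q.2 (emb x) := hval₂ Q hQ x hxQ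
  have h4 : (0:ℝ) ≤ aeval Q.2 (emb x) := by rw [← h3]; exact (g x).2.1
  have h5 := mul_le_mul_of_nonneg_right (Nat.le_ceil k) h4
  rw [h2, h3]
  calc aeval P.2 (emb x) ≤ k * aeval Q.2 (emb x) := h1
  _ ≤ _ := h5

/-- value of the fold -/
def foldOp {n : ℕ} (l : List ((Fin n → UI) → UI)) : (Fin n → UI) → UI :=
  l.foldr (fun p q => fun x => oplus (p x) (q x)) (fun _ => zeroUI)

lemma foldOp_isTerm {n : ℕ} (l : List ((Fin n → UI) → UI)) (hl : ∀ s ∈ l, IsTerm n s) :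
    IsTerm n (foldOp l) := by
  induction l with
  | nil => exact IsTerm.zero
  | cons s l ih =>
    exact IsTerm.add (hl s List.mem_cons_self)
      (ih fun t ht => hl t (List.mem_cons_of_mem s ht))

lemma sum_map_nonneg {n : ℕ} (l : List ((Fin n → UI) → UI)) (x : Fin n → UI) :
    0 ≤ (l.map (fun s => (s x).1)).sum := by
  apply List.sum_nonneg
  intro a ha
  obtain ⟨s, _, rfl⟩ := List.mem_map.1 ha
  exact (s x).2.1

lemma foldOp_val {n : ℕ} (l : List ((Fin n → UI) → UI)) (x : Fin n → UI) :
    ((foldOp l) x).1 = min ((l.map (fun s => (s x).1)).sum) 1 := by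
  induction l with
  | nil => simp [foldOp, zeroUI]
  | cons s l ih =>
    have : ((foldOp (s :: l)) x).1 = min ((s x).1 + ((foldOp l) x).1) 1 := rfl
    rw [this, ih]
    have hs := (s x).2.1
    have hsum := sum_map_nonneg l x
    rcases le_total ((l.map (fun t => (t x).1)).sum) 1 with hle | hge
    · rw [min_eq_left hle]; simp
    · rw [min_eq_right hge]
      rw [min_eq_right (by linarith), min_eq_right (by simpa using by linarith :
        (1:ℝ) ≤ ((s :: l).map (fun t => (t x).1)).sum)]

lemma sum_zero_of_each {l : List ℝ} (hpos : ∀ a ∈ l, 0 ≤ a) (hsum : l.sum = 0) :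
    ∀ a ∈ l, a = 0 := by
  induction l with
  | nil => simp
  | cons b l ih =>
    rw [List.sum_cons] at hsum
    have h1 : 0 ≤ b := hpos b List.mem_cons_self
    have h2 : 0 ≤ l.sum := List.sum_nonneg fun a ha => hpos a (List.mem_cons_of_mem b ha)
    have hb : b = 0 := by linarith
    have hl : l.sum = 0 := by linarith
    intro a ha
    rcases List.mem_cons.1 ha with rfl | ha
    · exact hb
    · exact ih (fun a ha => hpos a (List.mem_cons_of_mem b ha)) hl a ha

def rep {n : ℕ} (l : List ((Fin n → UI) → UI)) : ℕ → List ((Fin n → UI) → UI)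
  | 0 => []
  | k + 1 => l ++ rep l k

lemma rep_mem {n : ℕ} (l : List ((Fin n → UI) → UI)) (k : ℕ) :
    ∀ s ∈ rep l k, s ∈ l := by
  induction k with
  | zero => simp [rep]
  | succ k ih =>
    intro s hs
    rcases List.mem_append.1 hs with hs | hs
    · exact hs
    · exact ih s hs

lemma rep_sum {n : ℕ} (l : List ((Fin n → UI) → UI)) (k : ℕ) (x : Fin n → UI) :
    ((rep l k).map (fun s => (s x).1)).sum = k * (l.map (fun s => (s x).1)).sum := by
  induction k with
  | zero => simp [rep]
  | succ k ih =>
    show ((l ++ rep l k).map _).sum = _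
    rw [List.map_append, List.sum_append, ih]
    push_cast
    ring

lemma d_zero {a b : UI} (hab : a.1 = b.1) :
    (oplus (subUI a b) (subUI b a)).1 = 0 := by
  simp only [oplus, subUI, mneg]
  rw [hab]
  have h1 : (1:ℝ) - b.1 + b.1 = 1 := by ring
  rw [h1, min_self]
  norm_num


theorem stmt15 (n : ℕ) (S₁ S₂ : Set ((Fin n → UI) → UI))
    (hS₁ : S₁.Finite) (hS₂ : S₂.Finite)
    (hS₁t : ∀ g ∈ S₁, IsTerm n g) (hS₂t : ∀ g ∈ S₂, IsTerm n g)
    (h h' : (Fin n → UI) → UI) (hh : IsTerm n h) (hh' : IsTerm n h')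
    (heq : ∀ x : Fin n → UI, (∀ g ∈ S₁, (g x).1 = 0) → (∀ g ∈ S₂, (g x).1 = 0) →
      (h x).1 = (h' x).1) :
    InIdealGen n (S₁ ∪ S₂) (fun x => oplus (subUI (h x) (h' x)) (subUI (h' x) (h x))) := by
  classical
  set l₀ : List ((Fin n → UI) → UI) := (hS₁.toFinset ∪ hS₂.toFinset).toList with hl₀
  have hl₀mem : ∀ s, s ∈ l₀ ↔ s ∈ S₁ ∪ S₂ := by
    intro s
    rw [hl₀, Finset.mem_toList, Finset.mem_union, Set.Finite.mem_toFinset,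
      Set.Finite.mem_toFinset]
    rfl
  set gs : (Fin n → UI) → UI := foldOp l₀ with hgs
  have hgsterm : IsTerm n gs := by
    apply foldOp_isTerm
    intro s hs
    rcases (hl₀mem s).1 hs with hs | hs
    · exact hS₁t s hs
    · exact hS₂t s hs
  set d : (Fin n → UI) → UI := fun x => oplus (subUI (h x) (h' x)) (subUI (h' x) (h x))
    with hd
  have hdterm : IsTerm n d := by
    rw [hd]
    simp only [subUI]
    exact IsTerm.add (IsTerm.neg (IsTerm.add (IsTerm.neg hh) hh'))
      (IsTerm.neg (IsTerm.add (IsTerm.neg hh') hh))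
  have hZ : ∀ x, (gs x).1 = 0 → (d x).1 = 0 := by
    intro x hx
    rw [hgs, foldOp_val] at hx
    have hsum0 : ((l₀.map (fun s => (s x).1)).sum) = 0 := by
      rcases le_total ((l₀.map (fun s => (s x).1)).sum) 1 with hle | hge
      · rwa [min_eq_left hle] at hx
      · rw [min_eq_right hge] at hx; norm_num at hx
    have heach : ∀ s ∈ l₀, (s x).1 = 0 := by
      intro s hs
      exact sum_zero_of_each (fun a ha => by
        obtain ⟨t, _, rfl⟩ := List.mem_map.1 ha; exact (t x).2.1) hsum0 _
        (List.mem_map.2 ⟨s, hs, rfl⟩)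
    have hhx : (h x).1 = (h' x).1 := by
      apply heq x
      · intro g hg; exact heach g ((hl₀mem g).2 (Or.inl hg))
      · intro g hg; exact heach g ((hl₀mem g).2 (Or.inr hg))
    rw [hd]
    exact d_zero hhx
  obtain ⟨K, hK⟩ := main_bound d gs (hasPres_of_isTerm hdterm) (hasPres_of_isTerm hgsterm) hZ
  refine ⟨hdterm, rep l₀ K, ?_, ?_⟩
  · intro s hs
    exact (hl₀mem s).1 (rep_mem l₀ K s hs)
  · intro x
    show (d x).1 ≤ ((foldOp (rep l₀ K)) x).1
    rw [foldOp_val, rep_sum]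
    apply le_min _ (d x).2.2
    have h1 := hK x
    have h2 : (gs x).1 = min ((l₀.map (fun s => (s x).1)).sum) 1 := foldOp_val l₀ x
    have h3 : min ((l₀.map (fun s => (s x).1)).sum) 1 ≤ (l₀.map (fun s => (s x).1)).sum :=
      min_le_left _ _
    have h4 : (K:ℝ) * (gs x).1 ≤ (K:ℝ) * (l₀.map (fun s => (s x).1)).sum := by
      rw [h2]
      exact mul_le_mul_of_nonneg_left h3 (Nat.cast_nonneg K)
    linarith
end
end
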